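/- Let π be a permutation of {1,...,n}. The maximum size of an induced matching in G(π) equals the maximum length of a chain of matches (a sequence e₁ < e₂ < ... < e_k under the order e < e' iff y < x' and π⁻¹(x) < π⁻¹(y')). -/

import Mathlib

def permGraph {n : ℕ} (π : Equiv.Perm (Fin n)) : SimpleGraph (Fin n) where
  Adj u v := (u < v ∧ π.symm v < π.symm u) ∨ (v < u ∧ π.symm u < π.symm v)
  symm := by constructor; intro u v h; tauto
  loopless := by constructor; intro u h; rcases h with ⟨h, _⟩ | ⟨h, _⟩ <;> exact lt_irrefl u h

def IsMatch {n : ℕ} (π : Equiv.Perm (Fin n)) (x y : Fin n) : Prop :=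
  x < y ∧ π.symm y < π.symm x

def MatchLT {n : ℕ} (π : Equiv.Perm (Fin n)) (e e' : Fin n × Fin n) : Prop :=
  e.2 < e'.1 ∧ π.symm e.1 < π.symm e'.2

def IsInducedMatching {V : Type*} (G : SimpleGraph V) (M : Set (Sym2 V)) : Prop :=
  M ⊆ G.edgeSet ∧
    ∀ e ∈ M, ∀ f ∈ M, e ≠ f → ∀ u ∈ e, ∀ v ∈ f, u ≠ v ∧ ¬ G.Adj u v

lemma chainLT {n k : ℕ} (π : Equiv.Perm (Fin n)) (e : ℕ → Fin n × Fin n)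
    (h1 : ∀ i < k, IsMatch π (e i).1 (e i).2)
    (h2 : ∀ i, i + 1 < k → MatchLT π (e i) (e (i + 1))) :
    ∀ i j, i < j → j < k → MatchLT π (e i) (e j) := by
  intro i j hij hjk
  induction j with
  | zero => omega
  | succ j ih =>
    rcases Nat.lt_succ_iff_lt_or_eq.mp hij with h | h
    · have hjk' : j < k := by omega
      have := ih h hjk'
      have hm := h1 j hjk'
      have hs := h2 j hjk
      exact ⟨lt_trans this.1 (lt_trans hm.1 hs.1), lt_trans this.2 (lt_trans hm.2 hs.2)⟩
    · subst h; exact h2 i hjk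

lemma chain_to_matching {n k : ℕ} (π : Equiv.Perm (Fin n)) (e : ℕ → Fin n × Fin n)
    (h1 : ∀ i < k, IsMatch π (e i).1 (e i).2)
    (h2 : ∀ i, i + 1 < k → MatchLT π (e i) (e (i + 1))) :
    ∃ M : Finset (Sym2 (Fin n)), IsInducedMatching (permGraph π) ↑M ∧ M.card = k := by
  -- key separation: for i < j < k, all coords of e i are "below" those of e j
  have key : ∀ i j, i < j → j < k →
      ∀ u v : Fin n, (u = (e i).1 ∨ u = (e i).2) → (v = (e j).1 ∨ v = (e j).2) →
      u < v ∧ π.symm u < π.symm v := by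
    intro i j hij hjk u v hu hv
    have hlt := chainLT π e h1 h2 i j hij hjk
    have hmi := h1 i (lt_trans hij hjk)
    have hmj := h1 j hjk
    constructor
    · have hu' : u ≤ (e i).2 := by
        rcases hu with h | h
        · subst h; exact le_of_lt hmi.1
        · subst h; exact le_rfl
      have hv' : (e j).1 ≤ v := by
        rcases hv with h | h
        · subst h; exact le_rfl
        · subst h; exact le_of_lt hmj.1
      exact lt_of_le_of_lt hu' (lt_of_lt_of_le hlt.1 hv')
    · have hu' : π.symm u ≤ π.symm (e i).1 := by
        rcases hu with h | h
        · subst h; exact le_rfl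
        · subst h; exact le_of_lt hmi.2
      have hv' : π.symm (e j).2 ≤ π.symm v := by
        rcases hv with h | h
        · subst h; exact le_of_lt hmj.2
        · subst h; exact le_rfl
      exact lt_of_le_of_lt hu' (lt_of_lt_of_le hlt.2 hv')
  refine ⟨(Finset.range k).image (fun i => s((e i).1, (e i).2)), ?_, ?_⟩
  · constructor
    · intro z hz
      simp only [Finset.coe_image, Finset.coe_range, Set.mem_image, Set.mem_Iio] at hz
      obtain ⟨i, hik, rfl⟩ := hz
      have hm := h1 i hik
      exact Or.inl ⟨hm.1, hm.2⟩
    · intro z hz w hw hzw u hu v hv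
      simp only [Finset.coe_image, Finset.coe_range, Set.mem_image, Set.mem_Iio] at hz hw
      obtain ⟨i, hik, rfl⟩ := hz
      obtain ⟨j, hjk, rfl⟩ := hw
      have hij : i ≠ j := by rintro rfl; exact hzw rfl
      rw [Sym2.mem_iff] at hu hv
      rcases lt_or_gt_of_ne hij with h | h
      · obtain ⟨h1', h2'⟩ := key i j h hjk u v hu hv
        refine ⟨ne_of_lt h1', ?_⟩
        rintro (⟨ha, hb⟩ | ⟨ha, hb⟩)
        · exact absurd hb (not_lt_of_gt h2')
        · exact absurd ha (not_lt_of_gt h1')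
      · obtain ⟨h1', h2'⟩ := key j i h hik v u hv hu
        refine ⟨ne_of_gt h1', ?_⟩
        rintro (⟨ha, hb⟩ | ⟨ha, hb⟩)
        · exact absurd ha (not_lt_of_gt h1')
        · exact absurd hb (not_lt_of_gt h2')
  · rw [Finset.card_image_of_injOn, Finset.card_range]
    intro i hi j hj hij
    simp only [Finset.mem_coe, Finset.mem_range] at hi hj
    by_contra hne
    rcases lt_or_gt_of_ne hne with h | h
    · have h1' := (key i j h hj (e i).1 (e j).1 (Or.inl rfl) (Or.inl rfl)).1
      have h2' := (key i j h hj (e i).1 (e j).2 (Or.inl rfl) (Or.inr rfl)).1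
      rw [Sym2.eq_iff] at hij
      rcases hij with ⟨ha, _⟩ | ⟨ha, _⟩
      · rw [ha] at h1'; exact lt_irrefl _ h1'
      · rw [ha] at h2'; exact lt_irrefl _ h2'
    · have h1' := (key j i h hi (e j).1 (e i).1 (Or.inl rfl) (Or.inl rfl)).1
      have h2' := (key j i h hi (e j).1 (e i).2 (Or.inl rfl) (Or.inr rfl)).1
      rw [Sym2.eq_iff] at hij
      rcases hij with ⟨ha, _⟩ | ⟨ha, hb⟩
      · rw [ha] at h1'; exact lt_irrefl _ h1'
      · rw [hb] at h2'; exact lt_irrefl _ h2'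

def pairOf {n : ℕ} (z : Sym2 (Fin n)) : Fin n × Fin n :=
  Sym2.lift ⟨fun a b => (a ⊓ b, a ⊔ b), by intro a b; simp [inf_comm, sup_comm]⟩ z

lemma pairOf_spec {n : ℕ} (π : Equiv.Perm (Fin n)) (z : Sym2 (Fin n))
    (hz : z ∈ (permGraph π).edgeSet) :
    IsMatch π (pairOf z).1 (pairOf z).2 ∧ s((pairOf z).1, (pairOf z).2) = z := by
  induction z using Sym2.ind with
  | _ a b =>
    rw [SimpleGraph.mem_edgeSet] at hz
    rcases hz with ⟨hab, hba⟩ | ⟨hab, hba⟩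
    · have h1 : a ⊓ b = a := inf_eq_left.mpr (le_of_lt hab)
      have h2 : a ⊔ b = b := sup_eq_right.mpr (le_of_lt hab)
      simp [pairOf, h1, h2, IsMatch, hab, hba]
    · have h1 : a ⊓ b = b := inf_eq_right.mpr (le_of_lt hab)
      have h2 : a ⊔ b = a := sup_eq_left.mpr (le_of_lt hab)
      simp [pairOf, h1, h2, IsMatch, hab, hba, Sym2.eq_swap]

lemma pairOf_mk_of_lt {n : ℕ} {a b : Fin n} (h : a < b) : pairOf s(a, b) = (a, b) := by
  simp [pairOf, inf_eq_left.mpr h.le, sup_eq_right.mpr h.le]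

lemma matching_to_chain {n k : ℕ} (π : Equiv.Perm (Fin n)) (M : Finset (Sym2 (Fin n)))
    (hM : IsInducedMatching (permGraph π) ↑M) (hk : M.card = k) (d : Fin n × Fin n) :
    ∃ e : ℕ → Fin n × Fin n,
      (∀ i < k, IsMatch π (e i).1 (e i).2) ∧
      (∀ i, i + 1 < k → MatchLT π (e i) (e (i + 1))) := by
  classical
  set P : Finset (Fin n × Fin n) := M.image pairOf with hP
  -- every element of P is a match and recovers its edge
  have hPmem : ∀ p ∈ P, IsMatch π p.1 p.2 ∧ s(p.1, p.2) ∈ M := by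
    intro p hp
    rw [hP, Finset.mem_image] at hp
    obtain ⟨z, hz, rfl⟩ := hp
    have := pairOf_spec π z (hM.1 hz)
    exact ⟨this.1, by rw [this.2]; exact hz⟩
  -- cross properties between distinct elements of P
  have hcross : ∀ p ∈ P, ∀ q ∈ P, p ≠ q →
      ∀ u v : Fin n, (u = p.1 ∨ u = p.2) → (v = q.1 ∨ v = q.2) →
      u ≠ v ∧ ¬ (permGraph π).Adj u v := by
    intro p hp q hq hpq u v hu hv
    obtain ⟨hpm, hpe⟩ := hPmem p hp
    obtain ⟨hqm, hqe⟩ := hPmem q hq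
    have hne : s(p.1, p.2) ≠ s(q.1, q.2) := by
      intro h
      apply hpq
      have := congrArg pairOf h
      rw [pairOf_mk_of_lt hpm.1, pairOf_mk_of_lt hqm.1] at this
      exact Prod.ext (congrArg Prod.fst this) (congrArg Prod.snd this)
    have := hM.2 _ hpe _ hqe hne u ?_ v ?_
    · exact this
    · rcases hu with h | h <;> subst h
      · exact Sym2.mem_mk_left _ _
      · exact Sym2.mem_mk_right _ _
    · rcases hv with h | h <;> subst h
      · exact Sym2.mem_mk_left _ _
      · exact Sym2.mem_mk_right _ _
  -- non-adjacency plus order gives symm-order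
  have horder : ∀ p ∈ P, ∀ q ∈ P, p ≠ q → ∀ u v : Fin n,
      (u = p.1 ∨ u = p.2) → (v = q.1 ∨ v = q.2) → u < v → π.symm u < π.symm v := by
    intro p hp q hq hpq u v hu hv huv
    obtain ⟨hne, hnadj⟩ := hcross p hp q hq hpq u v hu hv
    have h1 : ¬ (π.symm v < π.symm u) := fun h => hnadj (Or.inl ⟨huv, h⟩)
    have h2 : π.symm u ≠ π.symm v := fun h => hne (π.symm.injective h)
    exact lt_of_le_of_ne (not_lt.mp h1) h2
  -- distinct elements of P have distinct first coordinates
  have hfst : ∀ p ∈ P, ∀ q ∈ P, p ≠ q → p.1 ≠ q.1 := fun p hp q hq hpq =>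
    (hcross p hp q hq hpq p.1 q.1 (Or.inl rfl) (Or.inl rfl)).1
  -- first coordinate order gives MatchLT
  have hMLT : ∀ p ∈ P, ∀ q ∈ P, p.1 < q.1 → MatchLT π p q := by
    intro p hp q hq h
    have hpq : p ≠ q := fun e => absurd (congrArg Prod.fst e) (ne_of_lt h)
    have hpm := (hPmem p hp).1
    have hqm := (hPmem q hq).1
    have h1 : π.symm p.1 < π.symm q.1 :=
      horder p hp q hq hpq _ _ (Or.inl rfl) (Or.inl rfl) h
    have h2 : p.2 < q.1 := by
      rcases lt_or_gt_of_ne ((hcross p hp q hq hpq p.2 q.1 (Or.inr rfl) (Or.inl rfl)).1)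
        with h' | h'
      · exact h'
      · exfalso
        have h3 : π.symm q.1 < π.symm p.2 :=
          horder q hq p hp hpq.symm _ _ (Or.inl rfl) (Or.inr rfl) h'
        exact absurd (lt_trans h1 h3) (not_lt_of_gt hpm.2)
    have h4 : π.symm p.1 < π.symm q.2 :=
      horder p hp q hq hpq _ _ (Or.inl rfl) (Or.inr rfl) (lt_trans h hqm.1)
    exact ⟨h2, h4⟩
  -- cardinality of P
  have hcardP : P.card = k := by
    rw [hP, Finset.card_image_of_injOn, hk]
    intro z hz w hw h
    calc z = s((pairOf z).1, (pairOf z).2) := (pairOf_spec π z (hM.1 hz)).2.symm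
      _ = s((pairOf w).1, (pairOf w).2) := by rw [h]
      _ = w := (pairOf_spec π w (hM.1 hw)).2
  -- sort P via the lexicographic order
  set P' : Finset (Fin n ×ₗ Fin n) := P.map (Equiv.toEmbedding toLex) with hP'
  set L : List (Fin n ×ₗ Fin n) := P'.sort (· ≤ ·) with hL
  have hLlen : L.length = k := by
    rw [hL, Finset.length_sort, hP', Finset.card_map, hcardP]
  have hLsort : L.SortedLT := P'.sortedLT_sort
  have hLmem : ∀ x ∈ L, ofLex x ∈ P := by
    intro x hx
    rw [hL, Finset.mem_sort] at hx
    rw [hP', Finset.mem_map] at hx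
    obtain ⟨a, ha, rfl⟩ := hx
    exact ha
  refine ⟨fun i => ofLex (L.getD i (toLex d)), ?_, ?_⟩
  · intro i hi
    have hi' : i < L.length := by rw [hLlen]; exact hi
    simp only [List.getD_eq_getElem L (toLex d) hi']
    exact (hPmem _ (hLmem _ (List.getElem_mem hi'))).1
  · intro i hi
    have hi1 : i < L.length := by rw [hLlen]; omega
    have hi2 : i + 1 < L.length := by rw [hLlen]; exact hi
    simp only [List.getD_eq_getElem L (toLex d) hi1, List.getD_eq_getElem L (toLex d) hi2]
    have hlt : L.get ⟨i, hi1⟩ < L.get ⟨i + 1, hi2⟩ :=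
      List.SortedLT.strictMono_get hLsort (by simp)
    have hlt' : toLex (ofLex (L.get ⟨i, hi1⟩)) < toLex (ofLex (L.get ⟨i + 1, hi2⟩)) := hlt
    rw [Prod.Lex.lt_iff] at hlt'
    have hm1 : ofLex (L.get ⟨i, hi1⟩) ∈ P := hLmem _ (List.get_mem L _)
    have hm2 : ofLex (L.get ⟨i + 1, hi2⟩) ∈ P := hLmem _ (List.get_mem L _)
    rcases hlt' with h | ⟨h, _⟩
    · exact hMLT _ hm1 _ hm2 h
    · exfalso
      exact hfst _ hm1 _ hm2 (fun e => absurd (congrArg toLex e) (ne_of_lt hlt)) h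

theorem stmt_6 {n : ℕ} (π : Equiv.Perm (Fin n)) :
    sSup {k : ℕ | ∃ M : Finset (Sym2 (Fin n)),
        IsInducedMatching (permGraph π) ↑M ∧ M.card = k} =
      sSup {k : ℕ | ∃ e : ℕ → Fin n × Fin n,
        (∀ i < k, IsMatch π (e i).1 (e i).2) ∧
        (∀ i, i + 1 < k → MatchLT π (e i) (e (i + 1)))} := by
  cases n with
  | zero =>
    have h1 : {k : ℕ | ∃ M : Finset (Sym2 (Fin 0)),
        IsInducedMatching (permGraph π) ↑M ∧ M.card = k} = {0} := by
      ext k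
      simp only [Set.mem_setOf_eq, Set.mem_singleton_iff]
      constructor
      · rintro ⟨M, _, rfl⟩
        rw [Finset.card_eq_zero]
        ext z
        induction z using Sym2.ind with | _ a b => exact a.elim0
      · rintro rfl
        refine ⟨∅, ⟨?_, ?_⟩, rfl⟩
        · simp
        · intro e he; simp at he
    have h2 : {k : ℕ | ∃ e : ℕ → Fin 0 × Fin 0,
        (∀ i < k, IsMatch π (e i).1 (e i).2) ∧
        (∀ i, i + 1 < k → MatchLT π (e i) (e (i + 1)))} = ∅ := by
      ext k
      simp only [Set.mem_setOf_eq, Set.mem_empty_iff_false, iff_false]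
      rintro ⟨e, -, -⟩
      exact (e 0).1.elim0
    rw [h1, h2, csSup_empty]
    simp
  | succ m =>
    apply congrArg
    ext k
    simp only [Set.mem_setOf_eq]
    constructor
    · rintro ⟨M, hM, hk⟩
      exact matching_to_chain π M hM hk (0, 0)
    · rintro ⟨e, h1, h2⟩
      exact chain_to_matching π e h1 h2
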